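/- arXiv:1501.00239 — 2 statements merged into one kernel-verified Lean document; each statement's English description precedes it below -/
import Mathlib

section
/- Let I be a CP instrument for (M,S) and ρ a normal state for which a strongly measurable family {ρ_s}_{s∈S} of posterior states exists; then any two strongly F-measurable families {ρ_s} and {ρ'_s} of posterior states with respect to (I,ρ) agree ‖Iρ‖-almost everywhere: ρ_s = ρ'_s for ‖Iρ‖-a.e. s ∈ S. -/
open scoped ComplexOrder
open Filter MeasureTheory

noncomputable section

local notation "⟪" x ", " y "⟫" => @inner ℂ _ _ x y

variable {H G K : Type} [NormedAddCommGroup H] [InnerProductSpace ℂ H] [CompleteSpace H]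
  [NormedAddCommGroup G] [InnerProductSpace ℂ G] [CompleteSpace G]
  [NormedAddCommGroup K] [InnerProductSpace ℂ K] [CompleteSpace K]

/-- Ultraweak convergence of a net of bounded operators (modeled via the weak operator
topology, which coincides with the σ-weak topology on bounded nets). -/
def UWTendsto {ι : Type} (l : Filter ι) (f : ι → H →L[ℂ] H) (X : H →L[ℂ] H) : Prop :=
  ∀ x y : H, Tendsto (fun i => ⟪y, (f i) x⟫) l (nhds ⟪y, X x⟫)

/-- A normal (ultraweakly continuous) map `B(G) → B(H)`. -/
def IsNormalMap (T : (G →L[ℂ] G) → (H →L[ℂ] H)) : Prop :=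
  ∀ (ι : Type) (l : Filter ι) (f : ι → G →L[ℂ] G) (X : G →L[ℂ] G),
    UWTendsto l f X → UWTendsto l (fun i => T (f i)) (T X)

/-- A normal (ultraweakly continuous) functional on `B(H)`. -/
def IsNormalFunctional (φ : (H →L[ℂ] H) → ℂ) : Prop :=
  ∀ (ι : Type) (l : Filter ι) (f : ι → H →L[ℂ] H) (X : H →L[ℂ] H),
    UWTendsto l f X → Tendsto (fun i => φ (f i)) l (nhds (φ X))

/-- A completely positive map `B(G) → B(H)`. -/
def IsCPMap (T : (G →L[ℂ] G) → (H →L[ℂ] H)) : Prop :=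
  ∀ (n : ℕ) (a : Fin n → G →L[ℂ] G) (x : Fin n → H),
    0 ≤ ∑ i, ∑ j, ⟪x i, (T (star (a i) * a j)) (x j)⟫

/-- A completely positive instrument (in dual, Heisenberg form) for a von Neumann algebra,
given as a subset `M ⊆ B(H)`; all axioms are imposed on elements of `M` only. -/
structure IsCPInstrumentOn {S : Type} [MeasurableSpace S] (M : Set (H →L[ℂ] H))
    (I : Set S → (H →L[ℂ] H) → (H →L[ℂ] H)) : Prop where
  mem : ∀ Δ : Set S, MeasurableSet Δ → ∀ X ∈ M, I Δ X ∈ M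
  map_add : ∀ Δ : Set S, MeasurableSet Δ → ∀ X ∈ M, ∀ Y ∈ M, I Δ (X + Y) = I Δ X + I Δ Y
  map_smul : ∀ Δ : Set S, MeasurableSet Δ → ∀ (c : ℂ), ∀ X ∈ M, I Δ (c • X) = c • I Δ X
  unital : I Set.univ 1 = 1
  cp : ∀ Δ : Set S, MeasurableSet Δ → ∀ (n : ℕ) (a : Fin n → H →L[ℂ] H), (∀ i, a i ∈ M) →
    ∀ x : Fin n → H, 0 ≤ ∑ i, ∑ j, ⟪x i, I Δ (star (a i) * a j) (x j)⟫
  normal : ∀ Δ : Set S, MeasurableSet Δ → ∀ (ι : Type) (l : Filter ι)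
    (f : ι → H →L[ℂ] H) (X : H →L[ℂ] H), (∀ i, f i ∈ M) → X ∈ M →
    UWTendsto l f X → UWTendsto l (fun i => I Δ (f i)) (I Δ X)
  additive : ∀ (Δ : ℕ → Set S), (∀ n, MeasurableSet (Δ n)) → Pairwise (Function.onFun Disjoint Δ) →
    ∀ ρ : (H →L[ℂ] H) →L[ℂ] ℂ, IsNormalFunctional ⇑ρ → ∀ X ∈ M,
      HasSum (fun n => ρ (I (Δ n) X)) (ρ (I (⋃ n, Δ n) X))

lemma aux_pos (φ : (H →L[ℂ] H) →L[ℂ] ℂ) (hpos : ∀ X : H →L[ℂ] H, 0 ≤ φ (star X * X))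
    {a : H →L[ℂ] H} (ha : 0 ≤ a) : 0 ≤ φ a := by
  rw [StarOrderedRing.nonneg_iff] at ha
  induction ha using AddSubmonoid.closure_induction with
  | mem x hx => obtain ⟨s, rfl⟩ := hx; exact hpos s
  | zero => simp
  | add x y _ _ hx hy => rw [map_add]; exact add_nonneg hx hy

lemma aux_sa_bound (φ : (H →L[ℂ] H) →L[ℂ] ℂ)
    (hpos : ∀ X : H →L[ℂ] H, 0 ≤ φ (star X * X)) (h1 : φ 1 = 1)
    {a : H →L[ℂ] H} (ha : IsSelfAdjoint a) : ‖φ a‖ ≤ ‖a‖ := by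
  have hmono : ∀ x y : H →L[ℂ] H, x ≤ y → φ x ≤ φ y := by
    intro x y hxy
    have h := aux_pos φ hpos (sub_nonneg.mpr hxy)
    rw [map_sub] at h
    exact sub_nonneg.mp h
  have hval : φ (algebraMap ℝ (H →L[ℂ] H) ‖a‖) = (‖a‖ : ℂ) := by
    rw [IsScalarTower.algebraMap_apply ℝ ℂ (H →L[ℂ] H), Algebra.algebraMap_eq_smul_one,
      _root_.map_smul, h1, smul_eq_mul, mul_one]
    rfl
  have h2 : φ a ≤ (‖a‖ : ℂ) := hval ▸ hmono _ _ ha.le_algebraMap_norm_self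
  have h3 : (-(‖a‖ : ℂ)) ≤ φ a := by
    have := hmono _ _ ha.neg_algebraMap_norm_le_self
    rwa [map_neg, hval] at this
  rw [Complex.le_def] at h2 h3
  have him : (φ a).im = 0 := by simpa using h2.2
  have hre : φ a = ((φ a).re : ℂ) := Complex.ext rfl (by simp [him])
  rw [hre, Complex.norm_real, Real.norm_eq_abs]
  refine abs_le.mpr ⟨by simpa using h3.1, by simpa using h2.1⟩

lemma state_norm_bound (φ : (H →L[ℂ] H) →L[ℂ] ℂ)
    (hpos : ∀ X : H →L[ℂ] H, 0 ≤ φ (star X * X)) (h1 : φ 1 = 1)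
    (X : H →L[ℂ] H) : ‖φ X‖ ≤ 2 * ‖X‖ := by
  set A : H →L[ℂ] H := (2⁻¹ : ℂ) • (X + star X) with hA
  set B : H →L[ℂ] H := (Complex.I * 2⁻¹) • (star X - X) with hB
  have hAsa : IsSelfAdjoint A := by
    rw [IsSelfAdjoint, hA, star_smul, star_add, star_star]
    rw [show star (2⁻¹ : ℂ) = (2⁻¹ : ℂ) by simp [Complex.star_def], add_comm]
  have hBsa : IsSelfAdjoint B := by
    rw [IsSelfAdjoint, hB, star_smul, star_sub, star_star]
    rw [show star (Complex.I * 2⁻¹) = -(Complex.I * 2⁻¹) by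
      simp [Complex.star_def], neg_smul, ← smul_neg, neg_sub]
  have hdecomp : X = A + Complex.I • B := by
    rw [hA, hB, smul_smul]
    rw [show Complex.I * (Complex.I * 2⁻¹) = -2⁻¹ by
      rw [← mul_assoc, Complex.I_mul_I]; ring]
    module
  have h2i : ‖(2⁻¹ : ℂ)‖ = 2⁻¹ := by norm_num
  have hnA : ‖A‖ ≤ ‖X‖ := by
    rw [hA, norm_smul, h2i]
    calc 2⁻¹ * ‖X + star X‖ ≤ 2⁻¹ * (‖X‖ + ‖star X‖) := by gcongr; exact norm_add_le _ _
      _ = ‖X‖ := by rw [norm_star]; ring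
  have hnB : ‖B‖ ≤ ‖X‖ := by
    rw [hB, norm_smul, norm_mul, Complex.norm_I, one_mul, h2i]
    calc 2⁻¹ * ‖star X - X‖ ≤ 2⁻¹ * (‖star X‖ + ‖X‖) := by gcongr; exact norm_sub_le _ _
      _ = ‖X‖ := by rw [norm_star]; ring
  have hφX : φ X = φ A + Complex.I * φ B := by
    rw [hdecomp, map_add, _root_.map_smul φ Complex.I B, smul_eq_mul]
  calc ‖φ X‖ = ‖φ A + Complex.I * φ B‖ := by rw [hφX]
    _ ≤ ‖φ A‖ + ‖Complex.I * φ B‖ := norm_add_le _ _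
    _ = ‖φ A‖ + ‖φ B‖ := by rw [norm_mul, Complex.norm_I, one_mul]
    _ ≤ ‖X‖ + ‖X‖ :=
        add_le_add ((aux_sa_bound φ hpos h1 hAsa).trans hnA)
          ((aux_sa_bound φ hpos h1 hBsa).trans hnB)
    _ = 2 * ‖X‖ := by ring
/-- Two strongly measurable families of posterior states (normal states on `M`, here realized
as normal functionals on `B(H)`) with respect to the same `(I,ρ)` — i.e. both integrating
against `ν = ‖Iρ‖` to the same values `J Δ X = ⟨I(Δ)ρ, X⟩` — agree `ν`-almost everywhere
as states of `M`. -/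
theorem stmt_8 {S : Type} [MeasurableSpace S] (M : VonNeumannAlgebra H)
    (ν : Measure S) [IsProbabilityMeasure ν]
    (J : Set S → (H →L[ℂ] H) → ℂ)
    (f g : S → (H →L[ℂ] H) →L[ℂ] ℂ)
    (hf : StronglyMeasurable f) (hg : StronglyMeasurable g)
    (hfstate : ∀ s, (∀ X : H →L[ℂ] H, 0 ≤ f s (star X * X)) ∧ f s 1 = 1 ∧
      IsNormalFunctional ⇑(f s))
    (hgstate : ∀ s, (∀ X : H →L[ℂ] H, 0 ≤ g s (star X * X)) ∧ g s 1 = 1 ∧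
      IsNormalFunctional ⇑(g s))
    (hfpost : ∀ Δ : Set S, MeasurableSet Δ → ∀ X ∈ M, ∫ s in Δ, f s X ∂ν = J Δ X)
    (hgpost : ∀ Δ : Set S, MeasurableSet Δ → ∀ X ∈ M, ∫ s in Δ, g s X ∂ν = J Δ X) :
    ∀ᵐ s ∂ν, ∀ X ∈ M, f s X = g s X := by
  classical
  have hDm : StronglyMeasurable (fun s => f s - g s) := hf.sub hg
  obtain ⟨c, hcc, hrange⟩ := hDm.isSeparable_range
  set P : ((H →L[ℂ] H) →L[ℂ] ℂ) → ℚ → Prop := fun d q =>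
    ∃ X, X ∈ M ∧ ‖X‖ ≤ 1 ∧ (q : ℝ) < ‖d X‖ with hPdef
  set W : ((H →L[ℂ] H) →L[ℂ] ℂ) → ℚ → (H →L[ℂ] H) := fun d q =>
    if h : P d q then h.choose else 1 with hWdef
  have hWmem : ∀ d q, W d q ∈ M := by
    intro d q
    by_cases h : P d q
    · simp only [hWdef, dif_pos h]; exact h.choose_spec.1
    · simp only [hWdef, dif_neg h]; exact one_mem M
  have hWspec : ∀ d q, P d q → ‖W d q‖ ≤ 1 ∧ (q : ℝ) < ‖d (W d q)‖ := by
    intro d q h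
    simp only [hWdef, dif_pos h]
    exact ⟨h.choose_spec.2.1, h.choose_spec.2.2⟩
  have key : ∀ X ∈ M, ∀ᵐ s ∂ν, f s X = g s X := by
    intro X hX
    have hfi : Integrable (fun s => f s X) ν := by
      refine ⟨(_root_.StronglyMeasurable.apply_continuousLinearMap hf X).aestronglyMeasurable,
        HasFiniteIntegral.of_bounded (C := 2 * ‖X‖) (Filter.Eventually.of_forall fun s => ?_)⟩
      exact state_norm_bound (f s) (hfstate s).1 (hfstate s).2.1 X
    have hgi : Integrable (fun s => g s X) ν := by
      refine ⟨(_root_.StronglyMeasurable.apply_continuousLinearMap hg X).aestronglyMeasurable,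
        HasFiniteIntegral.of_bounded (C := 2 * ‖X‖) (Filter.Eventually.of_forall fun s => ?_)⟩
      exact state_norm_bound (g s) (hgstate s).1 (hgstate s).2.1 X
    exact ae_eq_of_forall_setIntegral_eq_of_sigmaFinite
      (fun Δ hΔ _ => hfi.integrableOn) (fun Δ hΔ _ => hgi.integrableOn)
      (fun Δ hΔ _ => by rw [hfpost Δ hΔ X hX, hgpost Δ hΔ X hX])
  have hae : ∀ᵐ s ∂ν, ∀ d ∈ c, ∀ q : ℚ, f s (W d q) = g s (W d q) := by
    rw [MeasureTheory.ae_ball_iff hcc]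
    intro d hd
    rw [MeasureTheory.ae_all_iff]
    exact fun q => key (W d q) (hWmem d q)
  filter_upwards [hae] with s hs X hX
  by_contra hne
  set D : (H →L[ℂ] H) →L[ℂ] ℂ := f s - g s with hDdef
  have hDX : D X ≠ 0 := by
    simpa [hDdef, ContinuousLinearMap.sub_apply, sub_eq_zero] using hne
  have hX0 : X ≠ 0 := by rintro rfl; exact hDX (map_zero D)
  set Y : H →L[ℂ] H := ((‖X‖ : ℂ))⁻¹ • X with hYdef
  have hYM : Y ∈ M := M.toStarSubalgebra.smul_mem hX _
  have hXn : (0 : ℝ) < ‖X‖ := norm_pos_iff.mpr hX0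
  have hYn : ‖Y‖ = 1 := by
    rw [hYdef, norm_smul, norm_inv, Complex.norm_real, Real.norm_eq_abs, abs_of_pos hXn,
      inv_mul_cancel₀ hXn.ne']
  have hDY : D Y ≠ 0 := by
    rw [hYdef, _root_.map_smul, smul_eq_mul]
    refine mul_ne_zero (inv_ne_zero ?_) hDX
    exact_mod_cast hXn.ne'
  set ε := ‖D Y‖ with hεdef
  have hε0 : 0 < ε := norm_pos_iff.mpr hDY
  have hDc : D ∈ closure c := hrange ⟨s, rfl⟩
  obtain ⟨d, hd, hdist⟩ := Metric.mem_closure_iff.mp hDc (ε / 4) (by positivity)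
  rw [dist_eq_norm] at hdist
  obtain ⟨q, hq1, hq2⟩ := exists_rat_btwn (show ε / 4 < ε / 2 by linarith)
  have hdY : (q : ℝ) < ‖d Y‖ := by
    have h1 : ‖(D - d) Y‖ ≤ ε / 4 := by
      calc ‖(D - d) Y‖ ≤ ‖D - d‖ * ‖Y‖ := (D - d).le_opNorm Y
        _ ≤ ε / 4 := by rw [hYn, mul_one]; exact hdist.le
    have h2 : ‖D Y‖ - ‖d Y‖ ≤ ‖(D - d) Y‖ := by
      have h3 := norm_sub_norm_le (D Y) (d Y)
      simpa [ContinuousLinearMap.sub_apply] using h3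
    rw [← hεdef] at h2
    linarith
  have hP : P d q := ⟨Y, hYM, hYn.le, hdY⟩
  obtain ⟨hWn, hWq⟩ := hWspec d q hP
  have hzero : D (W d q) = 0 := by
    rw [hDdef]
    simp [ContinuousLinearMap.sub_apply, hs d hd q]
  have h1 : ‖d (W d q)‖ ≤ ε / 4 := by
    have h4 : ‖d (W d q) - D (W d q)‖ ≤ ε / 4 := by
      calc ‖d (W d q) - D (W d q)‖ = ‖(D - d) (W d q)‖ := by
            rw [norm_sub_rev, ← ContinuousLinearMap.sub_apply]
        _ ≤ ‖D - d‖ * ‖W d q‖ := (D - d).le_opNorm _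
        _ ≤ ε / 4 * 1 := mul_le_mul hdist.le hWn (norm_nonneg _) (by positivity)
        _ = ε / 4 := mul_one _
    rwa [hzero, sub_zero] at h4
  linarith

end
end

section
/- Consider the CP instrument I for (L^∞([0,1],m), [0,1]) defined by I(f,Δ) = [χ_Δ]·f, where m is Lebesgue measure. For the normal state ρ = m (i.e., ⟨ρ,[f]⟩ = ∫₀¹ f dx), there exists no family {ρ_x}_{x∈[0,1]} of normal states on L^∞([0,1],m) such that x ↦ ⟨ρ_x,[f]⟩ is measurable and ⟨I(Δ)ρ, [f]⟩ = ∫_Δ ⟨ρ_x,[f]⟩ dm(x) for all f and Borel Δ. -/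
open scoped ComplexOrder
open Filter MeasureTheory

noncomputable section

local notation "⟪" x ", " y "⟫" => @inner ℂ _ _ x y

variable {H G K : Type} [NormedAddCommGroup H] [InnerProductSpace ℂ H] [CompleteSpace H]
  [NormedAddCommGroup G] [InnerProductSpace ℂ G] [CompleteSpace G]
  [NormedAddCommGroup K] [InnerProductSpace ℂ K] [CompleteSpace K]

/-- Lebesgue measure on `[0,1]`. -/
def m01 : Measure ℝ := volume.restrict (Set.Icc (0:ℝ) 1)

/-- For the CP instrument `I(f,Δ) = χ_Δ f` on `L^∞([0,1],m)` and the state `ρ = m`, there is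
no family of posterior states: normal states on `L^∞([0,1],m)` are exactly probability
densities `g x ∈ L¹`, pairing `⟨ρ_x, [f]⟩ = ∫ f(y) g(x,y) dm(y)`, and no measurable such
family can satisfy `∫_Δ ⟨ρ_x,[f]⟩ dm(x) = ⟨I(Δ)ρ, [f]⟩ = ∫_Δ f dm`. -/
theorem stmt_10 :
    ¬ ∃ g : ℝ → ℝ → ℝ,
      (∀ x, Integrable (g x) m01) ∧
      (∀ x, ∀ᵐ y ∂m01, 0 ≤ g x y) ∧
      (∀ x, ∫ y, g x y ∂m01 = 1) ∧
      (∀ f : ℝ → ℝ, Measurable f → (∃ C, ∀ y, |f y| ≤ C) →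
        Measurable fun x => ∫ y, f y * g x y ∂m01) ∧
      (∀ f : ℝ → ℝ, Measurable f → (∃ C, ∀ y, |f y| ≤ C) →
        ∀ Δ : Set ℝ, MeasurableSet Δ →
          ∫ x in Δ, (∫ y, f y * g x y ∂m01) ∂m01 = ∫ x in Δ, f x ∂m01) := by
  rintro ⟨g, h1, h2, h3, h4, h5⟩
  have hfin : IsFiniteMeasure m01 := by
    constructor
    rw [m01, Measure.restrict_apply_univ, Real.volume_Icc]
    norm_num
  have hμne : m01 ≠ 0 := by
    intro h
    have h30 := h3 0
    rw [h] at h30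
    simp at h30
  -- the dyadic/rational test functions
  set s : ℚ × ℚ → Set ℝ := fun p => Set.Ico (p.1 : ℝ) (p.2 : ℝ) with hs
  set f : ℚ × ℚ → ℝ → ℝ := fun p => (s p).indicator (fun _ => (1:ℝ)) with hf
  have hsm : ∀ p, MeasurableSet (s p) := fun p => measurableSet_Ico
  have hfm : ∀ p, Measurable (f p) := fun p => measurable_const.indicator (hsm p)
  have hfb : ∀ p, ∃ C, ∀ y, |f p y| ≤ C := by
    intro p
    refine ⟨1, fun y => ?_⟩
    by_cases hy : y ∈ s p <;> simp [hf, hy]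
  have hind : ∀ p x, (fun y => f p y * g x y) = (s p).indicator (g x) := by
    intro p x
    funext y
    by_cases hy : y ∈ s p <;> simp [hf, hy]
  have hHnn : ∀ p x, 0 ≤ ∫ y, f p y * g x y ∂m01 := by
    intro p x
    refine integral_nonneg_of_ae ((h2 x).mono fun y hy => ?_)
    by_cases hmem : y ∈ s p <;> simp [hf, hmem, hy]
  have hHle : ∀ p x, ∫ y, f p y * g x y ∂m01 ≤ 1 := by
    intro p x
    rw [hind p x, integral_indicator (hsm p)]
    calc ∫ y in s p, g x y ∂m01 ≤ ∫ y, g x y ∂m01 :=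
          setIntegral_le_integral (h1 x) (h2 x)
      _ = 1 := h3 x
  -- Step A: a.e. x, for all p with x ∉ s p, ∫_{s p} g x = 0
  have hA : ∀ᵐ x ∂m01, ∀ p : ℚ × ℚ, x ∉ s p → ∫ y in s p, g x y ∂m01 = 0 := by
    rw [ae_all_iff]
    intro p
    have hH : Measurable fun x => ∫ y, f p y * g x y ∂m01 := h4 (f p) (hfm p) (hfb p)
    have heq := h5 (f p) (hfm p) (hfb p) (s p)ᶜ (hsm p).compl
    have hrhs : ∫ x in (s p)ᶜ, f p x ∂m01 = 0 := by
      refine setIntegral_eq_zero_of_forall_eq_zero fun x hx => ?_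
      simp [hf, Set.indicator_of_notMem (by simpa using hx)]
    rw [hrhs] at heq
    have hint : Integrable (fun x => ∫ y, f p y * g x y ∂m01) (m01.restrict (s p)ᶜ) := by
      refine Integrable.mono' (integrable_const 1) hH.aestronglyMeasurable
        (ae_of_all _ fun x => ?_)
      rw [Real.norm_eq_abs, abs_le]
      exact ⟨by linarith [hHnn p x], hHle p x⟩
    have hzero := (integral_eq_zero_iff_of_nonneg_ae
      (ae_of_all _ fun x => hHnn p x) hint).mp heq
    have := (ae_restrict_iff' (hsm p).compl).mp hzero
    refine this.mono fun x hx hxp => ?_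
    have h0 : ∫ y, f p y * g x y ∂m01 = 0 := hx hxp
    rwa [hind p x, integral_indicator (hsm p)] at h0
  -- pick a good x
  have : (ae m01).NeBot := ae_neBot.mpr hμne
  obtain ⟨x, hx⟩ := hA.exists
  -- Step B: for each p, a.e. y, (x ∉ s p → y ∈ s p → g x y = 0)
  have hB : ∀ᵐ y ∂m01, ∀ p : ℚ × ℚ, x ∉ s p → y ∈ s p → g x y = 0 := by
    rw [ae_all_iff]
    intro p
    by_cases hxp : x ∈ s p
    · exact ae_of_all _ fun y hx' => absurd hxp hx'
    · have h0 := hx p hxp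
      have hgz : g x =ᵐ[m01.restrict (s p)] 0 := by
        refine (integral_eq_zero_iff_of_nonneg_ae (ae_restrict_of_ae (h2 x))
          ((h1 x).restrict)).mp h0
      have := (ae_restrict_iff' (hsm p)).mp hgz
      exact this.mono fun y hy _ hmem => hy hmem
  have hnex : ∀ᵐ y ∂m01, y ≠ x := by
    rw [ae_iff]
    have hsub : {y : ℝ | ¬ y ≠ x} = {x} := by ext y; simp
    rw [hsub]
    refine le_antisymm (le_trans (Measure.restrict_le_self _) ?_) zero_le
    simp
  have hzero : ∀ᵐ y ∂m01, g x y = 0 := by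
    filter_upwards [hB, hnex] with y hy hyx
    rcases lt_or_gt_of_ne hyx with hlt | hgt
    · obtain ⟨r, hr1, hr2⟩ := exists_rat_btwn hlt
      obtain ⟨q, hq1, hq2⟩ := exists_rat_btwn (show y - 1 < y by linarith)
      exact hy (q, r) (by simp [hs, Set.mem_Ico]; intro h; linarith)
        (by simp [hs, Set.mem_Ico]; exact ⟨le_of_lt hq2, hr1⟩)
    · obtain ⟨q, hq1, hq2⟩ := exists_rat_btwn hgt
      obtain ⟨r, hr1, hr2⟩ := exists_rat_btwn (show y < y + 1 by linarith)
      exact hy (q, r) (by simp [hs, Set.mem_Ico]; intro h; linarith)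
        (by simp [hs, Set.mem_Ico]; exact ⟨le_of_lt hq2, hr1⟩)
  have : ∫ y, g x y ∂m01 = 0 := by
    rw [integral_congr_ae hzero, integral_zero]
  rw [h3 x] at this
  exact one_ne_zero this


end
end
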